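/- Let m be an odd positive integer, and for k = 1, …, (m−1)/2 set μ_k = cos(kπ/m) > 0 and ω_k = sin(kπ/m) > 0. Let c_0, c_k, d_k be real numbers and define P : [0, ∞) → ℝ by P(t) = c_0 e^{−t} + Σ_{k=1}^{(m−1)/2} e^{−μ_k t} [c_k cos(ω_k t) + d_k sin(ω_k t)]. Assume the (one-sided) derivatives at 0 satisfy P^{(j)}(0) = 0 for every odd j with 1 ≤ j ≤ 2m−3, and P^{(2m−1)}(0) = −1/2. Then ∫_{−∞}^{∞} P(|τ|) dτ = 1 and ∫_{−∞}^{∞} τ^k P(|τ|) dτ = 0 for every k = 1, …, 2m−1; that is, t ↦ P(|t|) is a kernel of order 2m. -/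

import Mathlib

open MeasureTheory Set Filter Topology Nat

lemma tendsto_pow_mul_exp_neg' {b : ℝ} (hb : 0 < b) (n : ℕ) :
    Tendsto (fun t : ℝ => t ^ n * Real.exp (-(b * t))) atTop (𝓝 0) := by
  have h1 : Tendsto (fun t : ℝ => b * t) atTop atTop :=
    Tendsto.const_mul_atTop hb tendsto_id
  have h2 := (Real.tendsto_pow_mul_exp_neg_atTop_nhds_zero n).comp h1
  have h3 := h2.const_mul ((b ^ n)⁻¹)
  rw [mul_zero] at h3
  refine h3.congr fun t => ?_
  simp only [Function.comp]
  rw [mul_pow]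
  field_simp

lemma integrableOn_pow_mul_cexp {l : ℂ} (hl : l.re < 0) (n : ℕ) :
    IntegrableOn (fun t : ℝ => (t : ℂ) ^ n * Complex.exp (l * t)) (Ioi 0) := by
  have hb : (0:ℝ) < -l.re := by linarith
  have hreal : IntegrableOn (fun t : ℝ => t ^ (n : ℝ) * Real.exp (-(-l.re) * t ^ (1:ℝ)))
      (Ioi 0) :=
    integrableOn_rpow_mul_exp_neg_mul_rpow (lt_of_lt_of_le neg_one_lt_zero (Nat.cast_nonneg n)) one_pos hb
  refine Integrable.mono' hreal ?_ ?_
  · exact ((Complex.continuous_ofReal.pow n).mul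
      (Complex.continuous_exp.comp (continuous_const.mul Complex.continuous_ofReal))).aestronglyMeasurable
  · rw [ae_restrict_iff' measurableSet_Ioi]
    filter_upwards with t ht
    have ht0 : (0:ℝ) < t := ht
    rw [norm_mul, norm_pow, Complex.norm_real, Real.norm_eq_abs,
      Complex.norm_exp, Real.rpow_natCast, Real.rpow_one]
    have : (l * t).re = l.re * t := by simp
    rw [this, abs_of_pos ht0]
    ring_nf
    exact le_refl _

lemma hasDerivAt_cexp_mul (l : ℂ) (x : ℝ) :
    HasDerivAt (fun t : ℝ => Complex.exp (l * t)) (l * Complex.exp (l * x)) x := by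
  have h0 : HasDerivAt (fun t : ℝ => (t : ℂ)) 1 x := by
    simpa using (hasDerivAt_id x).ofReal_comp
  have h1 : HasDerivAt (fun t : ℝ => l * (t : ℂ)) l x := by
    simpa using h0.const_mul l
  simpa [mul_comm] using h1.cexp

lemma integral_pow_mul_cexp {l : ℂ} (hl : l.re < 0) (n : ℕ) :
    ∫ t in Ioi (0:ℝ), (t : ℂ) ^ n * Complex.exp (l * t) = n ! / (-l) ^ (n + 1) := by
  have hb : (0:ℝ) < -l.re := by linarith
  have hl0 : l ≠ 0 := fun h => by simp [h] at hl
  induction n with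
  | zero =>
    have hderiv : ∀ x ∈ Ici (0:ℝ),
        HasDerivAt (fun t : ℝ => l⁻¹ * Complex.exp (l * t)) ((x:ℂ) ^ 0 * Complex.exp (l * x)) x := by
      intro x _
      have := (hasDerivAt_cexp_mul l x).const_mul l⁻¹
      refine this.congr_deriv ?_
      field_simp
    have hint := integrableOn_pow_mul_cexp hl 0
    have htend : Tendsto (fun t : ℝ => l⁻¹ * Complex.exp (l * t)) atTop (𝓝 0) := by
      have htz : Tendsto (fun t : ℝ => ‖l⁻¹‖ * (t ^ 0 * Real.exp (-(-l.re * t)))) atTop (𝓝 0) := by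
        simpa using (tendsto_pow_mul_exp_neg' hb 0).const_mul ‖l⁻¹‖
      refine squeeze_zero_norm (fun t => ?_) htz
      ·
        rw [norm_mul, Complex.norm_exp]
        simp [neg_neg]
    have key := integral_Ioi_of_hasDerivAt_of_tendsto' hderiv hint htend
    rw [key]
    simp [Nat.factorial]
  | succ n ih =>
    set f' : ℝ → ℂ := fun x => (x:ℂ) ^ (n+1) * Complex.exp (l * x)
      + (l⁻¹ * (n+1)) * ((x:ℂ) ^ n * Complex.exp (l * x)) with hf'
    have hderiv : ∀ x ∈ Ici (0:ℝ),
        HasDerivAt (fun t : ℝ => l⁻¹ * ((t:ℂ) ^ (n+1) * Complex.exp (l * t))) (f' x) x := by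
      intro x _
      have h0 : HasDerivAt (fun t : ℝ => (t : ℂ)) 1 x := by
        simpa using (hasDerivAt_id x).ofReal_comp
      have hpow : HasDerivAt (fun t : ℝ => (t:ℂ) ^ (n+1)) ((n+1) * (x:ℂ) ^ n) x := by
        simpa using (hasDerivAt_pow (n+1) ((x:ℝ):ℂ)).comp_ofReal
      have hmul := (hpow.mul (hasDerivAt_cexp_mul l x)).const_mul l⁻¹
      refine hmul.congr_deriv ?_
      rw [hf']
      field_simp
      ring
    have hint : IntegrableOn f' (Ioi 0) :=
      (integrableOn_pow_mul_cexp hl (n+1)).add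
        ((integrableOn_pow_mul_cexp hl n).const_mul (l⁻¹ * (n+1)))
    have htend : Tendsto (fun t : ℝ => l⁻¹ * ((t:ℂ) ^ (n+1) * Complex.exp (l * t))) atTop (𝓝 0) := by
      have htz : Tendsto (fun t : ℝ => ‖l⁻¹‖ * (t ^ (n+1) * Real.exp (-(-l.re * t)))) atTop (𝓝 0) := by
        simpa using (tendsto_pow_mul_exp_neg' hb (n+1)).const_mul ‖l⁻¹‖
      refine squeeze_zero_norm' ?_ htz
      · filter_upwards [eventually_ge_atTop (0:ℝ)] with t ht
        rw [norm_mul, norm_mul, norm_pow,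
          Complex.norm_real, Real.norm_eq_abs, Complex.norm_exp, abs_of_nonneg ht]
        simp [neg_neg]
    have key := integral_Ioi_of_hasDerivAt_of_tendsto' hderiv hint htend
    have hsplit : ∫ x in Ioi (0:ℝ), f' x
        = (∫ x in Ioi (0:ℝ), (x:ℂ) ^ (n+1) * Complex.exp (l * x))
          + (l⁻¹ * (n+1)) * ∫ x in Ioi (0:ℝ), (x:ℂ) ^ n * Complex.exp (l * x) := by
      rw [integral_add (integrableOn_pow_mul_cexp hl (n+1))
        ((integrableOn_pow_mul_cexp hl n).const_mul (l⁻¹ * (n+1))), MeasureTheory.integral_const_mul]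
    rw [hsplit] at key
    simp only [Complex.ofReal_zero, ne_eq, zero_pow, Nat.succ_ne_zero, not_false_iff,
      mul_zero, zero_mul, sub_zero, zero_sub, ih] at key
    have : (↑(n+1)! : ℂ) / (-l) ^ (n+2) = -((l⁻¹ * (n+1)) * (↑n ! / (-l) ^ (n+1))) := by
      rw [Nat.factorial_succ]
      push_cast
      have hml : (-l) ^ (n+1) ≠ 0 := pow_ne_zero _ (neg_ne_zero.mpr hl0)
      have hml2 : (-l) ^ (n+2) ≠ 0 := pow_ne_zero _ (neg_ne_zero.mpr hl0)
      field_simp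
      ring
    rw [this]
    linear_combination key

lemma iteratedDeriv_re_sum (S : Finset ℕ) (a l : ℕ → ℂ) (n : ℕ) :
    iteratedDeriv n (fun t : ℝ => ∑ k ∈ S, (a k * Complex.exp (l k * t)).re) =
      fun t : ℝ => ∑ k ∈ S, (a k * (l k) ^ n * Complex.exp (l k * t)).re := by
  induction n with
  | zero => simp
  | succ n ih =>
    rw [iteratedDeriv_succ, ih]
    funext t
    have hsum : HasDerivAt (fun t : ℝ => ∑ k ∈ S, (a k * (l k) ^ n * Complex.exp (l k * t)).re)
        (∑ k ∈ S, (a k * (l k) ^ (n+1) * Complex.exp (l k * t)).re) t := by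
      refine HasDerivAt.fun_sum (fun k hk => ?_)
      have h1 : HasDerivAt (fun t : ℝ => a k * (l k) ^ n * Complex.exp (l k * t))
          (a k * (l k) ^ n * (l k * Complex.exp (l k * t))) t :=
        (hasDerivAt_cexp_mul (l k) t).const_mul (a k * (l k) ^ n)
      have h2 := Complex.reCLM.hasFDerivAt.comp_hasDerivAt t h1
      have h3 : Complex.reCLM (a k * (l k) ^ n * (l k * Complex.exp (l k * t)))
          = (a k * (l k) ^ (n+1) * Complex.exp (l k * t)).re := by
        simp only [Complex.reCLM_apply]
        ring_nf
      rw [h3] at h2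
      exact h2
    exact hsum.deriv


/-- Odd-`m` case of the Proposition in Section 3.3 (β = 1): if
`P(t) = c_0 e^{−t} + Σ_{k=1}^{(m−1)/2} e^{−μ_k t}[c_k cos(ω_k t) + d_k sin(ω_k t)]` with
`μ_k = cos(kπ/m)`, `ω_k = sin(kπ/m)`, and the derivatives at `0` satisfy `P^{(j)}(0) = 0`
for odd `1 ≤ j ≤ 2m−3` and `P^{(2m−1)}(0) = −1/2`, then `t ↦ P(|t|)` is a kernel of order
`2m`. -/
theorem stmt_5 (m : ℕ) (hm : Odd m) (hm0 : 0 < m)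
    (c d : ℕ → ℝ) (P : ℝ → ℝ)
    (hP : ∀ t : ℝ, P t = c 0 * Real.exp (-t) + ∑ k ∈ Finset.Icc 1 ((m - 1) / 2),
      Real.exp (-(Real.cos ((k : ℝ) * Real.pi / (m : ℝ))) * t) *
        (c k * Real.cos (Real.sin ((k : ℝ) * Real.pi / (m : ℝ)) * t) +
         d k * Real.sin (Real.sin ((k : ℝ) * Real.pi / (m : ℝ)) * t)))
    (hodd : ∀ j : ℕ, Odd j → 1 ≤ j → j ≤ 2 * m - 3 → iteratedDeriv j P 0 = 0)
    (htop : iteratedDeriv (2 * m - 1) P 0 = -(1 / 2)) :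
    (∫ τ : ℝ, P |τ|) = 1 ∧
      ∀ k : ℕ, 1 ≤ k → k ≤ 2 * m - 1 → (∫ τ : ℝ, τ ^ k * P |τ|) = 0 := by
  classical
  obtain ⟨r, hr⟩ := hm
  set s : Finset ℕ := Finset.Icc 1 ((m - 1) / 2) with hs
  have h0s : (0 : ℕ) ∉ s := by simp [hs]
  set S : Finset ℕ := insert 0 s with hSdef
  set l : ℕ → ℂ := fun k =>
    Complex.exp (((Real.pi - (k : ℝ) * Real.pi / (m : ℝ) : ℝ) : ℂ) * Complex.I) with hl
  set a : ℕ → ℂ := fun k => (c k : ℂ) - (d k : ℂ) * Complex.I with ha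
  have hmR : (0:ℝ) < (m:ℝ) := by exact_mod_cast hm0
  have hre : ∀ k : ℕ, (l k).re = -Real.cos ((k : ℝ) * Real.pi / (m : ℝ)) := by
    intro k
    simp only [hl]
    rw [Complex.exp_ofReal_mul_I_re, Real.cos_pi_sub]
  have him : ∀ k : ℕ, (l k).im = Real.sin ((k : ℝ) * Real.pi / (m : ℝ)) := by
    intro k
    simp only [hl]
    rw [Complex.exp_ofReal_mul_I_im, Real.sin_pi_sub]
  have hkr : ∀ k ∈ S, k ≤ r := by
    intro k hk
    rcases Finset.mem_insert.mp hk with h | h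
    · omega
    · have := (Finset.mem_Icc.mp h).2; omega
  have hreneg : ∀ k ∈ S, (l k).re < 0 := by
    intro k hk
    rw [hre]
    have h2k : (2 * k : ℝ) < (m : ℝ) := by
      have : 2 * k < m := by have := hkr k hk; omega
      exact_mod_cast this
    have hlt : (k : ℝ) * Real.pi / (m : ℝ) < Real.pi / 2 := by
      rw [div_lt_div_iff₀ hmR (by norm_num : (0:ℝ) < 2)]
      nlinarith [Real.pi_pos]
    have hge : (0:ℝ) ≤ (k : ℝ) * Real.pi / (m : ℝ) := by positivity
    have := Real.cos_pos_of_mem_Ioo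
      ⟨by nlinarith [Real.pi_pos], hlt⟩
    linarith
  have hpow1 : ∀ k ∈ S, (l k) ^ (2 * m) = 1 := by
    intro k hk
    have hkm : k ≤ m := by have := hkr k hk; omega
    simp only [hl]
    rw [← Complex.exp_nat_mul]
    have harg : ((2 * m : ℕ) : ℂ) * (((Real.pi - (k : ℝ) * Real.pi / (m : ℝ) : ℝ) : ℂ) * Complex.I)
        = ((m : ℤ) - (k : ℤ)) * (2 * (Real.pi : ℂ) * Complex.I) := by
      have hmC : (m : ℂ) ≠ 0 := Nat.cast_ne_zero.mpr hm0.ne'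
      push_cast
      field_simp
    rw [harg]
    exact_mod_cast Complex.exp_int_mul_two_pi_mul_I ((m : ℤ) - (k : ℤ))
  have hterm : ∀ (k : ℕ) (t : ℝ), (a k * Complex.exp (l k * t)).re
      = Real.exp ((l k).re * t) *
        (c k * Real.cos ((l k).im * t) + d k * Real.sin ((l k).im * t)) := by
    intro k t
    have h1 : (l k * t).re = (l k).re * t := by simp
    have h2 : (l k * t).im = (l k).im * t := by simp
    rw [Complex.mul_re, Complex.exp_re, Complex.exp_im, h1, h2]
    simp only [ha, Complex.sub_re, Complex.sub_im, Complex.ofReal_re, Complex.ofReal_im,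
      Complex.mul_re, Complex.mul_im, Complex.I_re, Complex.I_im]
    ring
  have hPt : ∀ t : ℝ, P t = ∑ k ∈ S, (a k * Complex.exp (l k * t)).re := by
    intro t
    rw [hP t, hSdef, Finset.sum_insert h0s]
    have h0term : (a 0 * Complex.exp (l 0 * t)).re = c 0 * Real.exp (-t) := by
      rw [hterm 0 t, hre 0, him 0]
      simp
      ring
    rw [h0term]
    congr 1
    refine Finset.sum_congr rfl fun k hk => ?_
    rw [hterm k t, hre k, him k]
  have hP2 : P = fun t : ℝ => ∑ k ∈ S, (a k * Complex.exp (l k * t)).re := funext hPt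
  have hDeriv : ∀ n : ℕ, iteratedDeriv n P 0 = ∑ k ∈ S, (a k * (l k) ^ n).re := by
    intro n
    rw [hP2, iteratedDeriv_re_sum]
    simp
  have hpt : ∀ n : ℕ, (fun t : ℝ => t ^ n * P t)
      = fun t : ℝ => (∑ k ∈ S, a k * ((t : ℂ) ^ n * Complex.exp (l k * t))).re := by
    intro n
    funext t
    rw [hPt t, Complex.re_sum, Finset.mul_sum]
    refine Finset.sum_congr rfl fun k hk => ?_
    rw [← Complex.re_ofReal_mul]
    congr 1
    push_cast
    ring
  have hG : ∀ n : ℕ, Integrable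
      (fun t : ℝ => ∑ k ∈ S, a k * ((t : ℂ) ^ n * Complex.exp (l k * t)))
      (volume.restrict (Ioi 0)) := fun n =>
    integrable_finset_sum S fun k hk =>
      ((integrableOn_pow_mul_cexp (hreneg k hk) n).const_mul (a k))
  have hIntOn : ∀ n : ℕ, IntegrableOn (fun t : ℝ => t ^ n * P t) (Ioi 0) := by
    intro n
    rw [hpt n]
    exact (hG n).re
  have hIntEq : ∀ n : ℕ, ∫ t in Ioi (0:ℝ), t ^ n * P t
      = ∑ k ∈ S, (((n ! : ℂ) / (-(l k)) ^ (n + 1)) * a k).re := by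
    intro n
    rw [hpt n]
    have h1 := (Complex.reCLM : ℂ →L[ℝ] ℝ).integral_comp_comm (hG n)
    simp only [Complex.reCLM_apply] at h1
    rw [h1, MeasureTheory.integral_finset_sum S fun k hk =>
      ((integrableOn_pow_mul_cexp (hreneg k hk) n).const_mul (a k)), Complex.re_sum]
    refine Finset.sum_congr rfl fun k hk => ?_
    rw [MeasureTheory.integral_const_mul, integral_pow_mul_cexp (hreneg k hk) n, mul_comm]
  have hKey : ∀ j : ℕ, j ≤ m - 1 → ∫ t in Ioi (0:ℝ), t ^ (2*j) * P t
      = -(((2*j)! : ℝ)) * iteratedDeriv (2*m - 1 - 2*j) P 0 := by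
    intro j hj
    rw [hIntEq (2*j), hDeriv (2*m - 1 - 2*j), Finset.mul_sum]
    refine Finset.sum_congr rfl fun k hk => ?_
    have hlk0 : l k ≠ 0 := by
      intro h
      have h2 := hpow1 k hk
      rw [h, zero_pow (by omega : 2*m ≠ 0)] at h2
      exact zero_ne_one h2
    have hinv : (l k) ^ (2*j + 1) * (l k) ^ (2*m - 1 - 2*j) = 1 := by
      rw [← pow_add, (by omega : 2*j + 1 + (2*m - 1 - 2*j) = 2*m)]
      exact hpow1 k hk
    have h3 : ((l k) ^ (2*j + 1))⁻¹ = (l k) ^ (2*m - 1 - 2*j) :=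
      inv_eq_of_mul_eq_one_right hinv
    have hco : (((2*j)! : ℂ)) / (-(l k)) ^ (2*j + 1)
        = -(((2*j)! : ℂ)) * (l k) ^ (2*m - 1 - 2*j) := by
      rw [Odd.neg_pow ⟨j, by ring⟩, div_neg, div_eq_mul_inv, h3, neg_mul]
    rw [hco]
    have hfin : -(((2*j)! : ℂ)) * (l k) ^ (2*m - 1 - 2*j) * a k
        = ((-(((2*j)! : ℝ)) : ℝ) : ℂ) * (a k * (l k) ^ (2*m - 1 - 2*j)) := by
      push_cast
      ring
    rw [hfin, Complex.re_ofReal_mul]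
  constructor
  · rw [integral_comp_abs (f := P)]
    have h00 : ∫ x in Ioi (0:ℝ), P x = ∫ x in Ioi (0:ℝ), x ^ (2*0) * P x := by
      refine setIntegral_congr_fun measurableSet_Ioi fun x hx => ?_
      norm_num
    rw [h00, hKey 0 (Nat.zero_le _), (by omega : 2*m - 1 - 2*0 = 2*m - 1), htop]
    norm_num
  · intro k hk1 hk2
    rcases Nat.even_or_odd k with hev | hod
    · obtain ⟨j, hj⟩ := hev
      have hj1 : 1 ≤ j := by omega
      have hjm : j ≤ m - 1 := by omega
      have heq : (∫ τ : ℝ, τ ^ k * P |τ|) = ∫ τ : ℝ, (fun x : ℝ => x ^ k * P x) |τ| := by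
        congr 1
        funext τ
        simp only
        rw [Even.pow_abs ⟨j, hj⟩]
      rw [heq, integral_comp_abs (f := fun x : ℝ => x ^ k * P x)]
      have hkj : k = 2*j := by omega
      rw [hkj] at hk1 hk2 ⊢
      rw [hKey j hjm, hodd (2*m - 1 - 2*j) ⟨m - 1 - j, by omega⟩ (by omega) (by omega)]
      ring
    · set f : ℝ → ℝ := fun τ => τ ^ k * P |τ| with hf
      have hIoi : IntegrableOn f (Ioi 0) := by
        refine (hIntOn k).congr_fun (fun x hx => ?_) measurableSet_Ioi
        simp only [hf]
        rw [abs_of_pos hx]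
      have hneg : (fun x : ℝ => f (-x)) = fun x : ℝ => -f x := by
        funext x
        simp only [hf]
        rw [abs_neg, Odd.neg_pow hod]
        ring
      have hIic : IntegrableOn f (Iic 0) := by
        rw [← Measure.map_neg_eq_self (volume : Measure ℝ)]
        have hemb : MeasurableEmbedding fun x : ℝ => -x :=
          (Homeomorph.neg ℝ).measurableEmbedding
        rw [hemb.integrableOn_map_iff]
        simp_rw [Function.comp_def, neg_preimage, neg_Iic, neg_zero]
        rw [hneg]
        exact (Iff.mpr integrableOn_Ici_iff_integrableOn_Ioi hIoi.neg)
      have hsplit := intervalIntegral.integral_Iic_add_Ioi hIic hIoi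
      have hminus : ∫ x in Iic (0:ℝ), f x = - ∫ x in Ioi (0:ℝ), f x := by
        have h1 := integral_comp_neg_Ioi (0:ℝ) f
        rw [neg_zero] at h1
        rw [← h1, hneg, integral_neg]
      show (∫ τ : ℝ, f τ) = 0
      rw [← hsplit, hminus]
      ring
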